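/- (Shapley-Taylor top-order Fourier formula) Let f : 2^{[n]} → ℝ with Fourier transform F and Möbius coefficients I^M(S) = (-2)^{|S|} ∑_{T ⊇ S} F(T). For |S| = ℓ, the Shapley-Taylor index I^{STII}(S, ℓ) = ∑_{T ⊇ S} C(|T|, ℓ)^{-1} I^M(T) equals ∑_{T ⊇ S} F(T) · ∑_{k=ℓ}^{|T|} C(k, ℓ)^{-1} (-2)^k C(|T| - ℓ, k - ℓ). -/

import Mathlib

/-- The parity character indexed by subsets: `(-1)^{|S ∩ m|}`. -/
def sgn {n : ℕ} (S m : Finset (Fin n)) : ℝ := (-1) ^ (S ∩ m).card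

open Finset in
lemma sum_between {n : ℕ} (S U : Finset (Fin n)) (h : S ⊆ U) (g : ℕ → ℝ) :
    ∑ T ∈ Finset.univ.filter (fun T => S ⊆ T ∧ T ⊆ U), g T.card
      = ∑ k ∈ Finset.Icc S.card U.card,
          ((U.card - S.card).choose (k - S.card) : ℝ) * g k := by
  have h1 : ∑ T ∈ Finset.univ.filter (fun T => S ⊆ T ∧ T ⊆ U), g T.card
      = ∑ A ∈ (U \ S).powerset, g (A.card + S.card) := by
    refine Finset.sum_nbij' (fun T => T \ S) (fun A => A ∪ S) ?_ ?_ ?_ ?_ ?_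
    · intro T hT
      simp only [mem_filter, mem_univ, true_and] at hT
      rw [mem_powerset]
      exact sdiff_subset_sdiff hT.2 le_rfl
    · intro A hA
      rw [mem_powerset] at hA
      simp only [mem_filter, mem_univ, true_and]
      refine ⟨subset_union_right, union_subset (hA.trans sdiff_subset) h⟩
    · intro T hT
      simp only [mem_filter, mem_univ, true_and] at hT
      exact sdiff_union_of_subset hT.1
    · intro A hA
      rw [mem_powerset] at hA
      apply union_sdiff_cancel_right
      exact disjoint_of_subset_left hA sdiff_disjoint
    · intro T hT
      simp only [mem_filter, mem_univ, true_and] at hT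
      rw [card_sdiff_of_subset hT.1, Nat.sub_add_cancel (card_le_card hT.1)]
  rw [h1, powerset_card_disjiUnion]
  erw [sum_disjiUnion]
  have h2 : ∀ i ∈ range ((U \ S).card + 1),
      ∑ A ∈ powersetCard i (U \ S), g (A.card + S.card)
        = ((U \ S).card.choose i : ℝ) * g (i + S.card) := by
    intro i _
    rw [← card_powersetCard, ← nsmul_eq_mul, ← sum_const]
    apply sum_congr rfl
    intro A hA
    rw [(mem_powersetCard.1 hA).2]
  rw [sum_congr rfl h2, card_sdiff_of_subset h]
  rw [show Finset.Icc S.card U.card = Finset.map ⟨fun i => i + S.card,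
      add_left_injective _⟩ (range (U.card - S.card + 1)) from ?_]
  · rw [sum_map]
    apply sum_congr rfl
    intro i _
    simp [Nat.add_sub_cancel]
  · have hle := Finset.card_le_card h
    ext k
    simp only [mem_Icc, mem_map, mem_range, Function.Embedding.coeFn_mk]
    constructor
    · rintro ⟨h1, h2⟩
      exact ⟨k - S.card, by omega, by omega⟩
    · rintro ⟨i, hi, rfl⟩
      omega

/-- Shapley-Taylor top-order Fourier formula. -/
theorem shapley_taylor_fourier {n ℓ : ℕ} (f F : Finset (Fin n) → ℝ)
    (hF : ∀ S, F S = (2 : ℝ)⁻¹ ^ n * ∑ m, sgn S m * f m)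
    (IM : Finset (Fin n) → ℝ)
    (hIM : ∀ S, IM S = (-2 : ℝ) ^ S.card *
      ∑ T ∈ Finset.univ.filter (fun T => S ⊆ T), F T)
    (S : Finset (Fin n)) (hS : S.card = ℓ) :
    ∑ T ∈ Finset.univ.filter (fun T => S ⊆ T), (T.card.choose ℓ : ℝ)⁻¹ * IM T =
      ∑ T ∈ Finset.univ.filter (fun T => S ⊆ T), F T *
        ∑ k ∈ Finset.Icc ℓ T.card,
          (k.choose ℓ : ℝ)⁻¹ * (-2 : ℝ) ^ k * ((T.card - ℓ).choose (k - ℓ) : ℝ) := by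
  classical
  simp only [hIM]
  have swap :
      ∑ T ∈ Finset.univ.filter (fun T => S ⊆ T),
        (T.card.choose ℓ : ℝ)⁻¹ * ((-2 : ℝ) ^ T.card *
          ∑ U ∈ Finset.univ.filter (fun U => T ⊆ U), F U)
      = ∑ U ∈ Finset.univ.filter (fun U => S ⊆ U),
          ∑ T ∈ Finset.univ.filter (fun T => S ⊆ T ∧ T ⊆ U),
            (T.card.choose ℓ : ℝ)⁻¹ * ((-2 : ℝ) ^ T.card * F U) := by
    simp_rw [Finset.mul_sum]
    exact Finset.sum_comm' (by
      intro T U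
      simp only [Finset.mem_filter, Finset.mem_univ, true_and]
      constructor
      · rintro ⟨h1, h2⟩; exact ⟨⟨h1, h2⟩, h1.trans h2⟩
      · rintro ⟨⟨h1, h2⟩, _⟩; exact ⟨h1, h2⟩)
  rw [swap]
  apply Finset.sum_congr rfl
  intro U hU
  simp only [Finset.mem_filter, Finset.mem_univ, true_and] at hU
  have := sum_between S U hU (fun c => (c.choose ℓ : ℝ)⁻¹ * ((-2 : ℝ) ^ c * F U))
  rw [this, hS, Finset.mul_sum]
  apply Finset.sum_congr rfl
  intro k _
  ring
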